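/- arXiv:0708.4149 — 6 statements merged into one kernel-verified Lean document; each statement's English description precedes it below -/
import Mathlib

section
/- Let A be an m×n real matrix with all entries nonnegative whose rank is exactly k (k ≥ 1), and let W₀ ∈ ℝ^{m×k}, H₀ ∈ ℝ^{k×n} be any matrices with A = W₀H₀. Then there exist entrywise nonnegative matrices W ∈ ℝ^{m×k} and H ∈ ℝ^{k×n} with A = WH if and only if there exists an invertible matrix Q ∈ ℝ^{k×k} such that W₀Q⁻¹ and QH₀ are both entrywise nonnegative. -/
open Matrix

/-- If `X * Y = Z` with `Z` of rank equal to the inner dimension `k`, then the column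
space of `X` equals the column space of `Z`. -/
private lemma range_eq_of_mul {m n k : ℕ} (X : Matrix (Fin m) (Fin k) ℝ)
    (Y : Matrix (Fin k) (Fin n) ℝ) (Z : Matrix (Fin m) (Fin n) ℝ)
    (hZ : Z = X * Y) (hrank : Z.rank = k) :
    LinearMap.range Z.mulVecLin = LinearMap.range X.mulVecLin := by
  have hle : LinearMap.range Z.mulVecLin ≤ LinearMap.range X.mulVecLin := by
    rw [hZ, Matrix.mulVecLin_mul]
    exact LinearMap.range_comp_le_range _ _
  refine Submodule.eq_of_le_of_finrank_le hle ?_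
  have h1 : Module.finrank ℝ (LinearMap.range Z.mulVecLin) = k := hrank
  have h2 : X.rank ≤ k := by simpa using X.rank_le_card_width
  rw [h1]
  exact h2

/-- A matrix `X : m × k` whose column space has dimension `k` has injective `mulVecLin`. -/
private lemma injective_of_range {m k : ℕ} (X : Matrix (Fin m) (Fin k) ℝ)
    (h : Module.finrank ℝ (LinearMap.range X.mulVecLin) = k) :
    Function.Injective X.mulVecLin := by
  rw [← LinearMap.ker_eq_bot]
  rw [← Submodule.finrank_eq_zero (R := ℝ)]
  have := LinearMap.finrank_range_add_finrank_ker X.mulVecLin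
  rw [h] at this
  have hk : Module.finrank ℝ (Fin k → ℝ) = k := by simp
  omega

/-- Theorem 1 (equivalence of EXACT NMF and P1): for a nonnegative matrix `A` of rank
exactly `k ≥ 1` and any factorization `A = W₀ * H₀` through `ℝ^k`, exact NMF has a
solution iff there is an invertible `Q` with `W₀ * Q⁻¹` and `Q * H₀` nonnegative. -/
theorem exact_nmf_iff_p1 {m n k : ℕ} (hk : 1 ≤ k)
    (A : Matrix (Fin m) (Fin n) ℝ) (hA : ∀ i j, 0 ≤ A i j) (hrank : A.rank = k)
    (W₀ : Matrix (Fin m) (Fin k) ℝ) (H₀ : Matrix (Fin k) (Fin n) ℝ)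
    (hfac : A = W₀ * H₀) :
    (∃ (W : Matrix (Fin m) (Fin k) ℝ) (H : Matrix (Fin k) (Fin n) ℝ),
        (∀ i j, 0 ≤ W i j) ∧ (∀ i j, 0 ≤ H i j) ∧ A = W * H) ↔
    (∃ Q : Matrix (Fin k) (Fin k) ℝ, IsUnit Q ∧
        (∀ i j, 0 ≤ (W₀ * Q⁻¹) i j) ∧ (∀ i j, 0 ≤ (Q * H₀) i j)) := by
  constructor
  · rintro ⟨W, H, hW, hH, hWH⟩
    -- column spaces all coincide
    have hrW₀ : LinearMap.range A.mulVecLin = LinearMap.range W₀.mulVecLin :=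
      range_eq_of_mul W₀ H₀ A hfac hrank
    have hrW : LinearMap.range A.mulVecLin = LinearMap.range W.mulVecLin :=
      range_eq_of_mul W H A hWH hrank
    have hrA : Module.finrank ℝ (LinearMap.range A.mulVecLin) = k := hrank
    have hinjW : Function.Injective W.mulVecLin :=
      injective_of_range W (by rw [← hrW]; exact hrA)
    have hinjW₀ : Function.Injective W₀.mulVecLin :=
      injective_of_range W₀ (by rw [← hrW₀]; exact hrA)
    -- each column of W₀ is in the range of W
    have hcol : ∀ j : Fin k, ∃ c : Fin k → ℝ, W *ᵥ c = fun i => W₀ i j := by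
      intro j
      have : (fun i => W₀ i j) ∈ LinearMap.range W.mulVecLin := by
        rw [← hrW, hrW₀]
        exact ⟨Pi.single j 1, by ext i; simp [Matrix.mulVecLin_apply]⟩
      obtain ⟨c, hc⟩ := this
      exact ⟨c, hc⟩
    choose c hc using hcol
    set Q : Matrix (Fin k) (Fin k) ℝ := Matrix.of fun l j => c j l with hQdef
    have hWQ : W * Q = W₀ := by
      ext i j
      have := congrFun (hc j) i
      simpa [Matrix.mulVec, Matrix.mul_apply, dotProduct, hQdef] using this
    -- Q is a unit
    have hinjQ : Function.Injective (Q.mulVec) := by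
      intro v w hvw
      have : W₀ *ᵥ v = W₀ *ᵥ w := by
        rw [← hWQ, ← Matrix.mulVec_mulVec, ← Matrix.mulVec_mulVec, hvw]
      exact hinjW₀ this
    have hQunit : IsUnit Q := Matrix.mulVec_injective_iff_isUnit.mp hinjQ
    have hQdet : IsUnit Q.det := (Matrix.isUnit_iff_isUnit_det Q).mp hQunit
    -- Q * H₀ = H
    have hQH : Q * H₀ = H := by
      have key : W * (Q * H₀) = W * H := by
        rw [← Matrix.mul_assoc, hWQ, ← hfac, ← hWH]
      -- cancel W on the left using injectivity
      ext i j
      have hcols : (Q * H₀) *ᵥ Pi.single j 1 = H *ᵥ Pi.single j 1 := by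
        apply hinjW
        show W.mulVecLin _ = W.mulVecLin _
        simp only [Matrix.mulVecLin_apply, Matrix.mulVec_mulVec, key]
      have := congrFun hcols i
      simpa using this
    -- W₀ * Q⁻¹ = W
    have hWQinv : W₀ * Q⁻¹ = W := by
      rw [← hWQ, Matrix.mul_assoc, Matrix.mul_nonsing_inv Q hQdet, Matrix.mul_one]
    refine ⟨Q, hQunit, ?_, ?_⟩
    · rw [hWQinv]; exact hW
    · rw [hQH]; exact hH
  · rintro ⟨Q, hQ, hWQ, hQH⟩
    refine ⟨W₀ * Q⁻¹, Q * H₀, hWQ, hQH, ?_⟩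
    rw [hfac, Matrix.mul_assoc, ← Matrix.mul_assoc Q⁻¹,
      Matrix.nonsing_inv_mul Q ((Matrix.isUnit_iff_isUnit_det Q).mp hQ), Matrix.one_mul]
end

section
/- Let W₀ ∈ ℝ^{m×k} and H₀ ∈ ℝ^{k×n} each have rank k (k ≥ 1) and suppose W₀H₀ is entrywise nonnegative. Then there exist an integer m′ with 1 ≤ m′ ≤ m, a matrix W₀′ ∈ ℝ^{m′×k} of rank k whose last column has every entry equal to 1, and a matrix H₀′ ∈ ℝ^{k×n} of rank k with W₀′H₀′ entrywise nonnegative, such that: there exists an invertible Q ∈ ℝ^{k×k} with W₀Q⁻¹ and QH₀ entrywise nonnegative if and only if there exists an invertible Q′ ∈ ℝ^{k×k} with W₀′Q′⁻¹ and Q′H₀′ entrywise nonnegative. -/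
open Matrix

lemma aux_vecMul_eq_zero {k n : ℕ} {H : Matrix (Fin k) (Fin n) ℝ} (hH : H.rank = k)
    {x : Fin k → ℝ} (hx : x ᵥ* H = 0) : x = 0 := by
  have h1 : Hᵀ.rank = k := by rw [Matrix.rank_transpose]; exact hH
  have h2 : Hᵀ *ᵥ x = 0 := by rw [Matrix.mulVec_transpose]; exact hx
  have h3 := LinearMap.finrank_range_add_finrank_ker (Hᵀ).mulVecLin
  rw [Module.finrank_fin_fun] at h3
  have h4 : Module.finrank ℝ (LinearMap.range (Hᵀ).mulVecLin) = k := h1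
  have h5 : Module.finrank ℝ (LinearMap.ker (Hᵀ).mulVecLin) = 0 := by omega
  rw [Submodule.finrank_eq_zero] at h5
  have h6 : x ∈ LinearMap.ker (Hᵀ).mulVecLin := by
    rw [LinearMap.mem_ker, Matrix.mulVecLin_apply]; exact h2
  rw [h5] at h6
  simpa using h6

lemma aux_exists_col {k : ℕ} (v : Fin k → ℝ) (hv : v ≠ 0) (la : Fin k) :
    ∃ B : Matrix (Fin k) (Fin k) ℝ, IsUnit B.det ∧ ∀ l, B l la = v l := by
  obtain ⟨j₀, hj₀⟩ : ∃ j, v j ≠ 0 := Function.ne_iff.mp hv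
  set σ : Equiv.Perm (Fin k) := Equiv.swap la j₀ with hσ
  set U : Matrix (Fin k) (Fin k) ℝ := (1 : Matrix (Fin k) (Fin k) ℝ).updateCol j₀ v with hU
  refine ⟨U.submatrix id σ, ?_, ?_⟩
  · rw [Matrix.det_permute' σ U]
    have hdU : U.det = v j₀ := by
      have := Matrix.cramer_apply (1 : Matrix (Fin k) (Fin k) ℝ) v j₀
      rw [Matrix.cramer_one] at this
      exact this.symm
    rw [hdU]
    refine isUnit_iff_ne_zero.mpr (mul_ne_zero ?_ hj₀)
    rcases Int.units_eq_one_or (Equiv.Perm.sign σ) with h | h <;> simp [h]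
  · intro l
    have : σ la = j₀ := Equiv.swap_apply_left la j₀
    rw [Matrix.submatrix_apply, this]; exact Matrix.updateCol_self

/-- Theorem 2 (P1 reduces to RESTRICTED P1): every P1 instance `(W₀, H₀)` is equivalent
to a RESTRICTED P1 instance `(W₀', H₀')` in which the last column of `W₀'` is all 1's. -/
theorem p1_equiv_restricted_p1 {m n k : ℕ} (hk : 1 ≤ k)
    (W₀ : Matrix (Fin m) (Fin k) ℝ) (H₀ : Matrix (Fin k) (Fin n) ℝ)
    (hW₀ : W₀.rank = k) (hH₀ : H₀.rank = k)
    (hprod : ∀ i j, 0 ≤ (W₀ * H₀) i j) :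
    ∃ (m' : ℕ) (_ : 1 ≤ m') (_ : m' ≤ m)
      (W₀' : Matrix (Fin m') (Fin k) ℝ) (H₀' : Matrix (Fin k) (Fin n) ℝ),
      W₀'.rank = k ∧ (∀ i, W₀' i ⟨k - 1, by omega⟩ = 1) ∧ H₀'.rank = k ∧
      (∀ i j, 0 ≤ (W₀' * H₀') i j) ∧
      ((∃ Q : Matrix (Fin k) (Fin k) ℝ, IsUnit Q ∧
          (∀ i j, 0 ≤ (W₀ * Q⁻¹) i j) ∧ (∀ i j, 0 ≤ (Q * H₀) i j)) ↔
       (∃ Q' : Matrix (Fin k) (Fin k) ℝ, IsUnit Q' ∧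
          (∀ i j, 0 ≤ (W₀' * Q'⁻¹) i j) ∧ (∀ i j, 0 ≤ (Q' * H₀') i j))) := by
  classical
  have hkm : k ≤ m := by
    have := W₀.rank_le_height
    omega
  have hm : 1 ≤ m := le_trans hk hkm
  -- a nonzero row exists
  obtain ⟨i₀, hi₀⟩ : ∃ i, W₀ i ≠ 0 := by
    by_contra h
    push_neg at h
    have : W₀ = 0 := funext h
    rw [this, Matrix.rank_zero] at hW₀
    omega
  -- row sums of the product
  set c : Fin m → ℝ := fun i => ∑ j, (W₀ * H₀) i j with hc_def
  have hc : ∀ i, W₀ i ≠ 0 → 0 < c i := by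
    intro i hi
    rcases lt_or_eq_of_le (Finset.sum_nonneg fun j _ => hprod i j) with h | h
    · exact h
    · exfalso
      apply hi
      have hz : ∀ j ∈ Finset.univ, (W₀ * H₀) i j = 0 :=
        (Finset.sum_eq_zero_iff_of_nonneg (fun j _ => hprod i j)).mp h.symm
      apply aux_vecMul_eq_zero hH₀ (x := W₀ i)
      funext j
      have : (W₀ i ᵥ* H₀) j = (W₀ * H₀) i j := by
        simp [Matrix.vecMul, Matrix.mul_apply, dotProduct]
      rw [this, hz j (Finset.mem_univ j)]
      rfl
  -- row replacement map
  set r : Fin m → Fin m := fun i => if W₀ i = 0 then i₀ else i with hr_def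
  have hr : ∀ i, W₀ (r i) ≠ 0 := by
    intro i
    by_cases h : W₀ i = 0 <;> simp [hr_def, h, hi₀]
  have hrne : ∀ i, W₀ i ≠ 0 → r i = i := by
    intro i h; simp [hr_def, h]
  -- the positive scaling
  set d : Fin m → ℝ := fun i => (c (r i))⁻¹ with hd_def
  have hd : ∀ i, 0 < d i := fun i => inv_pos.mpr (hc _ (hr i))
  -- the vector of row sums of H₀
  set v : Fin k → ℝ := fun j => ∑ l, H₀ j l with hv_def
  have hWv : ∀ i, ∑ l, W₀ i l * v l = c i := by
    intro i
    simp only [hv_def, hc_def, Finset.mul_sum, Matrix.mul_apply]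
    exact Finset.sum_comm
  have hv : v ≠ 0 := by
    intro h
    have h0 := hWv i₀
    rw [h] at h0
    simp at h0
    exact absurd h0.symm (ne_of_gt (hc i₀ hi₀))
  set la : Fin k := ⟨k - 1, by omega⟩ with hla_def
  obtain ⟨B, hBu, hBcol⟩ := aux_exists_col v hv la
  have hBBi : B * B⁻¹ = 1 := Matrix.mul_nonsing_inv B hBu
  have hBiB : B⁻¹ * B = 1 := Matrix.nonsing_inv_mul B hBu
  have hBisUnit : IsUnit B := (Matrix.isUnit_iff_isUnit_det B).mpr hBu
  have hBiu : IsUnit (B⁻¹).det := by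
    rw [Matrix.det_nonsing_inv]
    exact isUnit_iff_ne_zero.mpr (by
      simp [Ring.inverse_eq_inv', isUnit_iff_ne_zero.mp hBu])
  have hBiunit : IsUnit (B⁻¹) := (Matrix.isUnit_iff_isUnit_det _).mpr hBiu
  set M : Matrix (Fin m) (Fin k) ℝ := W₀.submatrix r id with hM_def
  -- key: submatrix commutes with multiplication
  have hsub : ∀ {p : ℕ} (X : Matrix (Fin k) (Fin p) ℝ), M * X = (W₀ * X).submatrix r id := by
    intro p X
    ext i j
    simp [hM_def, Matrix.mul_apply]
  have hBcan : ∀ {p : ℕ} (X : Matrix (Fin k) (Fin p) ℝ), B * (B⁻¹ * X) = X := by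
    intro p X; rw [← Matrix.mul_assoc, hBBi, Matrix.one_mul]
  set W' : Matrix (Fin m) (Fin k) ℝ := Matrix.diagonal d * (M * B) with hW'_def
  set H' : Matrix (Fin k) (Fin n) ℝ := B⁻¹ * H₀ with hH'_def
  -- key nonneg transfer
  have hkey : ∀ {p : ℕ} (Y : Matrix (Fin k) (Fin p) ℝ),
      (∀ i j, 0 ≤ (W₀ * Y) i j) ↔
      (∀ i j, 0 ≤ (Matrix.diagonal d * ((W₀ * Y).submatrix r id)) i j) := by
    intro p Y
    constructor
    · intro h i j
      rw [Matrix.diagonal_mul]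
      exact mul_nonneg (le_of_lt (hd i)) (h (r i) j)
    · intro h i j
      by_cases hz : W₀ i = 0
      · have : (W₀ * Y) i j = 0 := by
          rw [Matrix.mul_apply]
          apply Finset.sum_eq_zero
          intro l _
          rw [show W₀ i l = 0 from congrFun hz l, zero_mul]
        rw [this]
      · have h1 := h i j
        rw [Matrix.diagonal_mul, Matrix.submatrix_apply, hrne i hz] at h1
        have := mul_nonneg (le_of_lt (inv_pos.mpr (hd i))) h1
        rwa [inv_mul_cancel_left₀ (ne_of_gt (hd i))] at this
  have hdiagu : IsUnit (Matrix.diagonal d).det := by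
    rw [Matrix.det_diagonal]
    exact isUnit_iff_ne_zero.mpr (ne_of_gt (Finset.prod_pos fun i _ => hd i))
  refine ⟨m, hm, le_refl m, W', H', ?_, ?_, ?_, ?_, ?_⟩
  · -- rank W' = k
    have h1 : W'.rank = M.rank := by
      rw [hW'_def, ← Matrix.mul_assoc,
        Matrix.rank_mul_eq_left_of_isUnit_det B _ hBu]
      exact Matrix.rank_mul_eq_right_of_isUnit_det (Matrix.diagonal d) M hdiagu
    have hle : M.rank ≤ k := M.rank_le_width
    have hge : k ≤ M.rank := by
      set G : Matrix (Fin m) (Fin m) ℝ :=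
        Matrix.of fun i l => if W₀ i = 0 then 0 else if l = i then (1 : ℝ) else 0 with hG_def
      have hGM : G * M = W₀ := by
        ext i j
        rw [Matrix.mul_apply]
        by_cases hz : W₀ i = 0
        · simp [hG_def, hz, congrFun hz j]
        · simp only [hG_def, Matrix.of_apply, hz, if_false, ite_mul, one_mul, zero_mul]
          rw [Finset.sum_ite_eq' Finset.univ i (fun l => M l j)]
          simp [hM_def, hrne i hz]
      calc k = W₀.rank := hW₀.symm
        _ = (G * M).rank := by rw [hGM]
        _ ≤ M.rank := Matrix.rank_mul_le_right G M
    rw [h1]; omega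
  · -- last column all ones
    intro i
    show W' i la = 1
    rw [hW'_def, Matrix.diagonal_mul, Matrix.mul_apply]
    have : ∀ l, M i l * B l la = W₀ (r i) l * v l := by
      intro l; rw [hBcol l]; rfl
    rw [Finset.sum_congr rfl (fun l _ => this l), hWv (r i)]
    exact inv_mul_cancel₀ (ne_of_gt (hc _ (hr i)))
  · -- rank H' = k
    rw [hH'_def, Matrix.rank_mul_eq_right_of_isUnit_det _ _ hBiu]
    exact hH₀
  · -- product nonneg
    have : W' * H' = Matrix.diagonal d * ((W₀ * H₀).submatrix r id) := by
      rw [hW'_def, hH'_def, Matrix.mul_assoc (Matrix.diagonal d), Matrix.mul_assoc M B,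
        hBcan, hsub]
    rw [this]
    exact (hkey H₀).mp hprod
  · -- the equivalence
    constructor
    · rintro ⟨Q, hQ, h1, h2⟩
      refine ⟨Q * B, hQ.mul hBisUnit, ?_, ?_⟩
      · have hQinv : (Q * B)⁻¹ = B⁻¹ * Q⁻¹ := Matrix.mul_inv_rev Q B
        have : W' * (Q * B)⁻¹ = Matrix.diagonal d * ((W₀ * Q⁻¹).submatrix r id) := by
          rw [hQinv, hW'_def, Matrix.mul_assoc (Matrix.diagonal d), Matrix.mul_assoc M B,
            hBcan, hsub]
        rw [this]
        exact (hkey Q⁻¹).mp h1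
      · have : (Q * B) * H' = Q * H₀ := by
          rw [hH'_def, Matrix.mul_assoc Q, hBcan]
        rw [this]
        exact h2
    · rintro ⟨Q', hQ', h1, h2⟩
      refine ⟨Q' * B⁻¹, hQ'.mul hBiunit, ?_, ?_⟩
      · have hQinv : (Q' * B⁻¹)⁻¹ = B * Q'⁻¹ := by
          rw [Matrix.mul_inv_rev, Matrix.nonsing_inv_nonsing_inv B hBu]
        rw [hQinv, ← Matrix.mul_assoc]
        have hW'Q : W' * Q'⁻¹ = Matrix.diagonal d * ((W₀ * (B * Q'⁻¹)).submatrix r id) := by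
          rw [hW'_def, Matrix.mul_assoc (Matrix.diagonal d), Matrix.mul_assoc M, ← hsub]
        have := (hkey (B * Q'⁻¹)).mpr (by rw [← hW'Q]; exact h1)
        intro i j
        have h3 := this i j
        rwa [← Matrix.mul_assoc] at h3
      · have : (Q' * B⁻¹) * H₀ = Q' * H' := by
          rw [hH'_def, Matrix.mul_assoc]
        rw [this]
        exact h2
end

section
/- Let k ≥ 1, let W₀ ∈ ℝ^{m×k} have rank k with last column equal to the all-ones vector, let H₀ ∈ ℝ^{k×n} have rank k, and suppose W₀H₀ is entrywise nonnegative. Define S = {x₁, …, x_m} ⊂ ℝ^{k−1}, where x_i consists of the first k−1 entries of row i of W₀, and define P = {x ∈ ℝ^{k−1} : for every j = 1,…,n, Σ_{l=1}^{k−1} H₀(l,j)·x_l + H₀(k,j) ≥ 0}. Let g₁, …, g_k ∈ ℝ^{k−1} be affinely independent points, let G ∈ ℝ^{k×k} be the matrix whose i-th column is (g_i ; 1), and set Q = Gᵀ (which is invertible). Then S ⊆ convexHull{g₁,…,g_k} and convexHull{g₁,…,g_k} ⊆ P hold if and only if W₀Q⁻¹ and QH₀ are both entrywise nonnegative. -/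
open Matrix

/-- The explicit correspondence in Theorem 3 between simplices `T` with `S ⊆ T ⊆ P`
and solutions `Q = Gᵀ` of the RESTRICTED P1 instance `(W₀, H₀)`.  Here `k = K + 1 ≥ 1`,
`S` consists of the first `k - 1` entries of the rows of `W₀`, `P` is the polyhedron
determined by `H₀`, the `g i` are affinely independent points of `ℝ^{k-1}`, and `G`
is the matrix whose `i`-th column is `(g i ; 1)`. -/
theorem intermediate_simplex_correspondence {m n K : ℕ}
    (W₀ : Matrix (Fin m) (Fin (K + 1)) ℝ) (H₀ : Matrix (Fin (K + 1)) (Fin n) ℝ)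
    (hW₀rank : W₀.rank = K + 1) (hW₀last : ∀ i, W₀ i (Fin.last K) = 1)
    (hH₀rank : H₀.rank = K + 1) (hprod : ∀ i j, 0 ≤ (W₀ * H₀) i j)
    (S : Set (Fin K → ℝ)) (hS : S = Set.range (fun i l => W₀ i (Fin.castSucc l)))
    (P : Set (Fin K → ℝ))
    (hP : P = {x | ∀ j, 0 ≤ (∑ l, H₀ (Fin.castSucc l) j * x l) + H₀ (Fin.last K) j})
    (g : Fin (K + 1) → (Fin K → ℝ)) (hg : AffineIndependent ℝ g)
    (G : Matrix (Fin (K + 1)) (Fin (K + 1)) ℝ)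
    (hG : G = Matrix.of fun l i => Fin.lastCases (1 : ℝ) (fun l' => g i l') l)
    (Q : Matrix (Fin (K + 1)) (Fin (K + 1)) ℝ) (hQ : Q = Gᵀ) :
    IsUnit Q ∧
    ((S ⊆ convexHull ℝ (Set.range g) ∧ convexHull ℝ (Set.range g) ⊆ P) ↔
      ((∀ i j, 0 ≤ (W₀ * Q⁻¹) i j) ∧ (∀ i j, 0 ≤ (Q * H₀) i j))) := by
  have hQc : ∀ i l, Q i (Fin.castSucc l) = g i l := by
    intro i l; simp [hQ, hG]
  have hQl : ∀ i, Q i (Fin.last K) = 1 := by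
    intro i; simp [hQ, hG]
  -- Q is invertible since its rows are linearly independent
  have hunit : IsUnit Q := by
    rw [← Matrix.linearIndependent_rows_iff_isUnit]
    rw [Fintype.linearIndependent_iff]
    intro c hc
    have hsum : ∑ j, c j = 0 := by
      have h := congrFun hc (Fin.last K)
      simpa [Finset.sum_apply, hQl] using h
    have hcomb : ∑ j, c j • g j = 0 := by
      funext l
      have h := congrFun hc (Fin.castSucc l)
      simpa [Finset.sum_apply, hQc] using h
    intro j
    exact affineIndependent_iff.1 hg Finset.univ c hsum hcomb j (Finset.mem_univ j)
  have hdet : IsUnit Q.det := (Matrix.isUnit_iff_isUnit_det Q).1 hunit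
  have hQQ : Q * Q⁻¹ = 1 := Matrix.mul_nonsing_inv Q hdet
  have hQQ' : Q⁻¹ * Q = 1 := Matrix.nonsing_inv_mul Q hdet
  have hWQQ : W₀ * Q⁻¹ * Q = W₀ := by
    rw [Matrix.mul_assoc, hQQ', Matrix.mul_one]
  have hid : ∀ i l0, ∑ j, (W₀ * Q⁻¹) i j * Q j l0 = W₀ i l0 := by
    intro i l0
    have h := congrFun (congrFun hWQQ i) l0
    simpa [Matrix.mul_apply] using h
  -- Part A: S ⊆ conv(g) ↔ W₀ Q⁻¹ ≥ 0
  have hA : (S ⊆ convexHull ℝ (Set.range g)) ↔ ∀ i j, 0 ≤ (W₀ * Q⁻¹) i j := by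
    rw [hS, Set.range_subset_iff]
    constructor
    · intro h i j
      have hxi := h i
      rw [convexHull_range_eq_exists_affineCombination] at hxi
      obtain ⟨s, w, hw0, hw1, hwc⟩ := hxi
      rw [Finset.affineCombination_eq_linear_combination s g w hw1] at hwc
      set μ : Fin (K + 1) → ℝ := fun j => if j ∈ s then w j else 0 with hμ
      have hμ0 : ∀ j, 0 ≤ μ j := by
        intro j
        by_cases hj : j ∈ s
        · simpa [hμ, hj] using hw0 j hj
        · simp [hμ, hj]
      have hμsum : ∑ j, μ j = 1 := by
        rw [hμ]; rw [Finset.sum_ite_mem, Finset.univ_inter, hw1]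
      have hμcomb : ∀ l, ∑ j, μ j * g j l = W₀ i (Fin.castSucc l) := by
        intro l
        have h := congrFun hwc l
        simp only [Finset.sum_apply, Pi.smul_apply, smul_eq_mul] at h
        rw [hμ]
        simp only [ite_mul, zero_mul]
        rw [Finset.sum_ite_mem, Finset.univ_inter, h]
      have hμQ : ∀ l0, ∑ j', μ j' * Q j' l0 = W₀ i l0 := by
        intro l0
        induction l0 using Fin.lastCases with
        | last => simp only [hQl, mul_one, hμsum, hW₀last]
        | cast l => simp only [hQc, hμcomb]
      have hval : (W₀ * Q⁻¹) i j = μ j := by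
        rw [Matrix.mul_apply]
        calc ∑ l0, W₀ i l0 * Q⁻¹ l0 j
            = ∑ l0, (∑ j', μ j' * Q j' l0) * Q⁻¹ l0 j := by
              refine Finset.sum_congr rfl fun l0 _ => ?_
              rw [hμQ l0]
          _ = ∑ j', μ j' * (Q * Q⁻¹) j' j := by
              simp_rw [Finset.sum_mul, Matrix.mul_apply, Finset.mul_sum, mul_assoc]
              rw [Finset.sum_comm]
          _ = μ j := by rw [hQQ]; simp [Matrix.one_apply]
      rw [hval]
      exact hμ0 j
    · intro h i
      set lam : Fin (K + 1) → ℝ := fun j => (W₀ * Q⁻¹) i j with hlam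
      have hlsum : ∑ j, lam j = 1 := by
        have h := hid i (Fin.last K)
        simpa [hQl, hW₀last] using h
      rw [convexHull_range_eq_exists_affineCombination]
      refine ⟨Finset.univ, lam, fun j _ => h i j, hlsum, ?_⟩
      rw [Finset.affineCombination_eq_linear_combination _ _ _ hlsum]
      funext l
      have hl := hid i (Fin.castSucc l)
      simp only [Finset.sum_apply, Pi.smul_apply, smul_eq_mul]
      simpa [hQc] using hl
  -- Part B: conv(g) ⊆ P ↔ Q H₀ ≥ 0
  have hQH : ∀ i j, (Q * H₀) i j
      = (∑ l, H₀ (Fin.castSucc l) j * g i l) + H₀ (Fin.last K) j := by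
    intro i j
    rw [Matrix.mul_apply, Fin.sum_univ_castSucc]
    simp [hQc, hQl, mul_comm]
  have hgP : ∀ i, g i ∈ P ↔ ∀ j, 0 ≤ (Q * H₀) i j := by
    intro i; simp [hP, hQH]
  have hPconv : Convex ℝ P := by
    rw [hP]
    intro x hx y hy a b ha hb hab j
    have hx' := hx j
    have hy' := hy j
    have key : (∑ l, H₀ (Fin.castSucc l) j * (a • x + b • y) l) + H₀ (Fin.last K) j
        = a * ((∑ l, H₀ (Fin.castSucc l) j * x l) + H₀ (Fin.last K) j)
        + b * ((∑ l, H₀ (Fin.castSucc l) j * y l) + H₀ (Fin.last K) j) := by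
      have h1 : ∀ l : Fin K, H₀ (Fin.castSucc l) j * (a • x + b • y) l
          = a * (H₀ (Fin.castSucc l) j * x l) + b * (H₀ (Fin.castSucc l) j * y l) := by
        intro l
        simp only [Pi.add_apply, Pi.smul_apply, smul_eq_mul]
        ring
      rw [Finset.sum_congr rfl fun l _ => h1 l, Finset.sum_add_distrib,
        ← Finset.mul_sum, ← Finset.mul_sum]
      linear_combination (-(H₀ (Fin.last K) j)) * hab
    rw [Set.mem_setOf_eq] at *
    show (0:ℝ) ≤ _
    rw [key]
    exact add_nonneg (mul_nonneg ha hx') (mul_nonneg hb hy')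
  have hB : (convexHull ℝ (Set.range g) ⊆ P) ↔ ∀ i j, 0 ≤ (Q * H₀) i j := by
    constructor
    · intro h i
      exact (hgP i).1 (h (subset_convexHull ℝ _ (Set.mem_range_self i)))
    · intro h
      refine convexHull_min ?_ hPconv
      rintro x ⟨i, rfl⟩
      exact (hgP i).2 (h i)
  exact ⟨hunit, and_congr hA hB⟩
end

section
/- Every m×n real matrix A with all entries nonnegative and rank exactly 2 admits an exact nonnegative factorization: there exist entrywise nonnegative matrices W ∈ ℝ^{m×2} and H ∈ ℝ^{2×n} such that A = WH. -/
open Matrix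

/-- Every entrywise nonnegative real matrix of rank exactly 2 admits an exact
nonnegative matrix factorization with inner dimension 2. -/
theorem rank_two_exact_nmf {m n : ℕ}
    (A : Matrix (Fin m) (Fin n) ℝ) (hA : ∀ i j, 0 ≤ A i j) (hrank : A.rank = 2) :
    ∃ (W : Matrix (Fin m) (Fin 2) ℝ) (H : Matrix (Fin 2) (Fin n) ℝ),
      (∀ i j, 0 ≤ W i j) ∧ (∀ i j, 0 ≤ H i j) ∧ A = W * H := by
  classical
  -- Step 1: two nonzero columns u, v spanning all columns
  obtain ⟨u, v, hu, hv, hu0, hv0, hspan⟩ :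
      ∃ u v : Fin m → ℝ, u ∈ Set.range Aᵀ ∧ v ∈ Set.range Aᵀ ∧ u ≠ 0 ∧ v ≠ 0 ∧
        ∀ j, Aᵀ j ∈ Submodule.span ℝ ({u, v} : Set (Fin m → ℝ)) := by
    obtain ⟨t, hs, hspan, hind⟩ := exists_linearIndependent ℝ (Set.range Aᵀ)
    haveI := hind.setFinite.fintype
    have hcard : t.toFinset.card = 2 := by
      rw [← finrank_span_set_eq_card hind, hspan]
      exact (Matrix.rank_eq_finrank_span_cols A).symm.trans hrank
    obtain ⟨u, v, huv, hsf⟩ := Finset.card_eq_two.mp hcard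
    have hsuv : t = {u, v} := by rw [← Set.coe_toFinset t, hsf]; simp
    refine ⟨u, v, hs (by rw [hsuv]; simp), hs (by rw [hsuv]; simp), ?_, ?_, ?_⟩
    · exact hind.ne_zero ⟨u, by rw [hsuv]; simp⟩
    · exact hind.ne_zero ⟨v, by rw [hsuv]; simp⟩
    · intro j
      rw [← hsuv, hspan]
      exact Submodule.subset_span (Set.mem_range_self j)
  choose α β hαβ using fun j => Submodule.mem_span_pair.mp (hspan j)
  have hcol : ∀ i j, A i j = α j * u i + β j * v i := by
    intro i j
    have h := congrFun (hαβ j) i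
    simpa [Matrix.transpose_apply] using h.symm
  -- column sums
  let s : Fin n → ℝ := fun j => ∑ i, A i j
  have hs_nn : ∀ j, 0 ≤ s j := fun j => Finset.sum_nonneg fun i _ => hA i j
  have hszero : ∀ j, s j = 0 → ∀ i, A i j = 0 := fun j hj i =>
    (Finset.sum_eq_zero_iff_of_nonneg (fun i _ => hA i j)).mp hj i (Finset.mem_univ i)
  obtain ⟨j1, hj1⟩ := hu
  obtain ⟨j2, hj2⟩ := hv
  have hs1 : s j1 ≠ 0 := by
    intro h
    exact hu0 (by funext i; rw [← hj1]; exact hszero j1 h i)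
  have hsv : (∑ i, v i) ≠ 0 := by
    intro h
    apply hv0
    funext i
    have : s j2 = 0 := by
      simp only [s]
      rw [show (∑ i, A i j2) = ∑ i, v i from Finset.sum_congr rfl fun i _ => by
        rw [← hj2]; rfl]
      exact h
    rw [← hj2]; exact hszero j2 this i
  have hsum : ∀ j, s j = α j * (∑ i, u i) + β j * (∑ i, v i) := by
    intro j
    simp only [s]
    rw [Finset.sum_congr rfl fun i _ => hcol i j]
    rw [Finset.sum_add_distrib, ← Finset.mul_sum, ← Finset.mul_sum]
  -- affine relation for nonzero columns
  have haff : ∀ j, s j ≠ 0 → (α j / s j) * (∑ i, u i) + (β j / s j) * (∑ i, v i) = 1 := by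
    intro j hj
    field_simp
    linear_combination (hsum j).symm
  -- extreme columns
  let J : Finset (Fin n) := Finset.univ.filter (fun j => s j ≠ 0)
  have hJne : J.Nonempty := ⟨j1, by simp [J, hs1]⟩
  obtain ⟨jm, hjmJ, hmin⟩ := J.exists_min_image (fun j => α j / s j) hJne
  obtain ⟨jM, hjMJ, hmax⟩ := J.exists_max_image (fun j => α j / s j) hJne
  have hsm : s jm ≠ 0 := (Finset.mem_filter.mp hjmJ).2
  have hsM : s jM ≠ 0 := (Finset.mem_filter.mp hjMJ).2
  let lam : Fin n → ℝ := fun j =>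
    if α jM / s jM = α jm / s jm then 0
    else (α j / s j - α jm / s jm) / (α jM / s jM - α jm / s jm)
  have hmm : α jm / s jm ≤ α jM / s jM := hmin jM hjMJ
  have hlam0 : ∀ j ∈ J, 0 ≤ lam j := by
    intro j hj
    simp only [lam]
    split
    · exact le_refl 0
    · exact div_nonneg (sub_nonneg.mpr (hmin j hj)) (sub_nonneg.mpr hmm)
  have hlam1 : ∀ j ∈ J, lam j ≤ 1 := by
    intro j hj
    simp only [lam]
    split
    · exact zero_le_one
    · rename_i h
      have hlt : α jm / s jm < α jM / s jM := lt_of_le_of_ne hmm (Ne.symm h)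
      rw [div_le_one (sub_pos.mpr hlt)]
      have := hmax j hj
      linarith
  have hacomb : ∀ j ∈ J, (1 - lam j) * (α jm / s jm) + lam j * (α jM / s jM) = α j / s j := by
    intro j hj
    simp only [lam]
    split
    · rename_i h
      have h1 := hmin j hj
      have h2 := hmax j hj
      rw [h] at h2
      have : α j / s j = α jm / s jm := le_antisymm h2 h1
      rw [this]; ring
    · rename_i h
      have hne : α jM / s jM - α jm / s jm ≠ 0 := sub_ne_zero.mpr h
      have gen : ∀ am aM aj : ℝ, aM - am ≠ 0 →
          (1 - (aj - am)/(aM - am)) * am + ((aj - am)/(aM - am)) * aM = aj := by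
        intro am aM aj hd
        field_simp
        ring
      exact gen _ _ _ hne
  have hbcomb : ∀ j ∈ J, (1 - lam j) * (β jm / s jm) + lam j * (β jM / s jM) = β j / s j := by
    intro j hj
    have hsj : s j ≠ 0 := (Finset.mem_filter.mp hj).2
    have h1 := haff jm hsm
    have h2 := haff jM hsM
    have h3 := haff j hsj
    have h4 := hacomb j hj
    have key : ((1 - lam j) * (β jm / s jm) + lam j * (β jM / s jM) - β j / s j) * (∑ i, v i) = 0 := by
      linear_combination (1 - lam j) * h1 + lam j * h2 - h3 - (∑ i, u i) * h4
    rcases mul_eq_zero.mp key with h | h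
    · linarith
    · exact absurd h hsv
  -- define the factors
  refine ⟨Matrix.of fun i k => ![A i jm / s jm, A i jM / s jM] k,
    Matrix.of fun k j => if s j = 0 then 0 else ![s j * (1 - lam j), s j * lam j] k, ?_, ?_, ?_⟩
  · intro i k
    simp only [Matrix.of_apply]
    fin_cases k
    · simpa using div_nonneg (hA i jm) (hs_nn jm)
    · simpa using div_nonneg (hA i jM) (hs_nn jM)
  · intro k j
    simp only [Matrix.of_apply]
    by_cases h : s j = 0
    · simp [h]
    · rw [if_neg h]
      have hj : j ∈ J := Finset.mem_filter.mpr ⟨Finset.mem_univ j, h⟩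
      have hsj : 0 < s j := lt_of_le_of_ne (hs_nn j) (Ne.symm h)
      fin_cases k
      · simpa using mul_nonneg hsj.le (by linarith [hlam1 j hj])
      · simpa using mul_nonneg hsj.le (hlam0 j hj)
  · ext i j
    rw [Matrix.mul_apply, Fin.sum_univ_two]
    simp only [Matrix.of_apply, Matrix.cons_val_zero, Matrix.cons_val_one, Matrix.head_cons]
    by_cases h : s j = 0
    · rw [if_pos h, if_pos h, hszero j h i]
      ring
    · rw [if_neg h, if_neg h]
      have hj : j ∈ J := Finset.mem_filter.mpr ⟨Finset.mem_univ j, h⟩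
      have h4 := hacomb j hj
      have h5 := hbcomb j hj
      have h_j : A i j = α j * u i + β j * v i := hcol i j
      have h_m : A i jm / s jm = (α jm / s jm) * u i + (β jm / s jm) * v i := by
        rw [hcol i jm]; ring
      have h_M : A i jM / s jM = (α jM / s jM) * u i + (β jM / s jM) * v i := by
        rw [hcol i jM]; ring
      have c1 : s j * (α j / s j) = α j := mul_div_cancel₀ (α j) h
      have c2 : s j * (β j / s j) = β j := mul_div_cancel₀ (β j) h
      linear_combination h_j - (s j * (1 - lam j)) * h_m - (s j * lam j) * h_M -
        (s j * u i) * h4 - (s j * v i) * h5 - u i * c1 - v i * c2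
end

section
/- Let P = [0,1] × [0,1] ⊂ ℝ² and S = {(0, 1/2), (1, 1/2), (1/2, 1/4), (1/2, 3/4)}. If g₁, g₂, g₃ ∈ ℝ² satisfy S ⊆ convexHull{g₁, g₂, g₃} ⊆ P, then convexHull{g₁, g₂, g₃} equals either T₀ = convexHull{(0,0), (0,1), (1, 1/2)} or T₁ = convexHull{(1,0), (1,1), (0, 1/2)}. -/
set_option maxHeartbeats 1000000

lemma combo (p a b c : ℝ×ℝ) (h : p ∈ convexHull ℝ {a,b,c}) :
    ∃ u v w : ℝ, 0 ≤ u ∧ 0 ≤ v ∧ 0 ≤ w ∧ u+v+w = 1 ∧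
      u*a.1+v*b.1+w*c.1 = p.1 ∧ u*a.2+v*b.2+w*c.2 = p.2 := by
  rw [show ({a,b,c} : Set (ℝ×ℝ)) = insert a {b,c} from rfl,
      convexHull_insert ⟨b, by simp⟩, convexHull_pair, mem_convexJoin] at h
  obtain ⟨x, hx, z, hz, hp⟩ := h
  rw [Set.mem_singleton_iff] at hx
  subst hx
  obtain ⟨s, t, hs, ht, hst, rfl⟩ := hz
  obtain ⟨u, v, hu, hv, huv, rfl⟩ := hp
  refine ⟨u, v*s, v*t, hu, by positivity, by positivity, by nlinarith, ?_, ?_⟩ <;>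
    simp [Prod.smul_def, smul_eq_mul] <;> ring

lemma core (g₁ g₂ g₃ : ℝ × ℝ)
    (hA : ((0:ℝ), (1/2:ℝ)) ∈ convexHull ℝ {g₁,g₂,g₃})
    (hB : ((1:ℝ), (1/2:ℝ)) ∈ convexHull ℝ {g₁,g₂,g₃})
    (hC : ((1/2:ℝ), (1/4:ℝ)) ∈ convexHull ℝ {g₁,g₂,g₃})
    (hD : ((1/2:ℝ), (3/4:ℝ)) ∈ convexHull ℝ {g₁,g₂,g₃})
    (hTP : convexHull ℝ {g₁,g₂,g₃} ⊆ Set.Icc (0:ℝ) 1 ×ˢ Set.Icc (0:ℝ) 1)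
    (h1 : g₁.1 = 0) (h2 : g₂.1 = 1) :
    convexHull ℝ {g₁, g₂, g₃} = convexHull ℝ {((0 : ℝ), (0 : ℝ)), (0, 1), (1, 1/2)} ∨
    convexHull ℝ {g₁, g₂, g₃} = convexHull ℝ {((1 : ℝ), (0 : ℝ)), (1, 1), (0, 1/2)} := by
  have hg₁ := hTP (subset_convexHull ℝ _ (by simp : g₁ ∈ ({g₁,g₂,g₃} : Set (ℝ×ℝ))))
  have hg₂ := hTP (subset_convexHull ℝ _ (by simp : g₂ ∈ ({g₁,g₂,g₃} : Set (ℝ×ℝ))))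
  have hg₃ := hTP (subset_convexHull ℝ _ (by simp : g₃ ∈ ({g₁,g₂,g₃} : Set (ℝ×ℝ))))
  simp only [Set.mem_prod, Set.mem_Icc] at hg₁ hg₂ hg₃
  obtain ⟨⟨hx1l, hx1u⟩, hy1l, hy1u⟩ := hg₁
  obtain ⟨⟨hx2l, hx2u⟩, hy2l, hy2u⟩ := hg₂
  obtain ⟨⟨hx3l, hx3u⟩, hy3l, hy3u⟩ := hg₃
  obtain ⟨a₁,a₂,a₃,ha₁,ha₂,ha₃,haS,haX,haY⟩ := combo _ g₁ g₂ g₃ hA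
  obtain ⟨b₁,b₂,b₃,hb₁,hb₂,hb₃,hbS,hbX,hbY⟩ := combo _ g₁ g₂ g₃ hB
  obtain ⟨c₁,c₂,c₃,hc₁,hc₂,hc₃,hcS,hcX,hcY⟩ := combo _ g₁ g₂ g₃ hC
  obtain ⟨d₁,d₂,d₃,hd₁,hd₂,hd₃,hdS,hdX,hdY⟩ := combo _ g₁ g₂ g₃ hD
  rw [h1, h2] at haX hbX hcX hdX
  norm_num at haX haY hbX hbY hcX hcY hdX hdY
  -- general facts
  have ha20 : a₂ = 0 := by linarith [mul_nonneg ha₃ hx3l]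
  have ha3x : a₃ * g₃.1 = 0 := by linarith [mul_nonneg ha₃ hx3l]
  have hexp : b₃*(1-g₃.1) = b₃ - b₃*g₃.1 := by ring
  have hprod : 0 ≤ b₃*(1-g₃.1) := mul_nonneg hb₃ (by linarith)
  have hb10 : b₁ = 0 := by linarith
  have hb3x : b₃ * (1 - g₃.1) = 0 := by linarith
  by_cases h30 : g₃.1 = 0
  · -- T₀ case
    left
    have hb30 : b₃ = 0 := by rw [h30] at hb3x; simpa using hb3x
    have hb21 : b₂ = 1 := by linarith
    have hy2 : g₂.2 = 1/2 := by
      linear_combination hbY - g₁.2 * hb10 - g₃.2 * hb30 - g₂.2 * hb21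
    have hc2 : c₂ = 1/2 := by linear_combination hcX - c₃ * h30
    have hcy : c₁*g₁.2 + c₃*g₃.2 = 0 := by
      linear_combination hcY - g₂.2 * hc2 - (1/2) * hy2
    have hc1y : c₁*g₁.2 = 0 := by
      linarith [mul_nonneg hc₁ hy1l, mul_nonneg hc₃ hy3l]
    have hc3y : c₃*g₃.2 = 0 := by
      linarith [mul_nonneg hc₁ hy1l, mul_nonneg hc₃ hy3l]
    have hd2 : d₂ = 1/2 := by linear_combination hdX - d₃ * h30
    have hdy : d₁*(1-g₁.2) + d₃*(1-g₃.2) = 0 := by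
      linear_combination hdS - hd2 - hdY + g₂.2 * hd2 + (1/2) * hy2
    have hd1y : d₁*(1-g₁.2) = 0 := by
      linarith [mul_nonneg hd₁ (by linarith : (0:ℝ) ≤ 1-g₁.2),
        mul_nonneg hd₃ (by linarith : (0:ℝ) ≤ 1-g₃.2)]
    have hd3y : d₃*(1-g₃.2) = 0 := by
      linarith [mul_nonneg hd₁ (by linarith : (0:ℝ) ≤ 1-g₁.2),
        mul_nonneg hd₃ (by linarith : (0:ℝ) ≤ 1-g₃.2)]
    have hy0 : g₁.2 = 0 ∨ g₃.2 = 0 := by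
      rcases mul_eq_zero.mp hc1y with h | h
      · rcases mul_eq_zero.mp hc3y with h' | h'
        · exact absurd hcS (by rw [h, hc2, h']; norm_num)
        · exact Or.inr h'
      · exact Or.inl h
    have hy1' : g₁.2 = 1 ∨ g₃.2 = 1 := by
      rcases mul_eq_zero.mp hd1y with h | h
      · rcases mul_eq_zero.mp hd3y with h' | h'
        · exact absurd hdS (by rw [h, hd2, h']; norm_num)
        · exact Or.inr (by linarith)
      · exact Or.inl (by linarith)
    have e₂ : g₂ = ((1:ℝ), (1/2:ℝ)) := Prod.ext h2 hy2
    rcases hy0 with h | h <;> rcases hy1' with h' | h'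
    · exact absurd (h.symm.trans h') (by norm_num)
    · have e₁ : g₁ = ((0:ℝ), (0:ℝ)) := Prod.ext h1 h
      have e₃ : g₃ = ((0:ℝ), (1:ℝ)) := Prod.ext h30 h'
      rw [e₁, e₂, e₃]
      exact congrArg _ (by ext p; simp; tauto)
    · have e₁ : g₁ = ((0:ℝ), (1:ℝ)) := Prod.ext h1 h'
      have e₃ : g₃ = ((0:ℝ), (0:ℝ)) := Prod.ext h30 h
      rw [e₁, e₂, e₃]
      exact congrArg _ (by ext p; simp; tauto)
    · exact absurd (h.symm.trans h') (by norm_num)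
  by_cases h31 : g₃.1 = 1
  · -- T₁ case
    right
    have ha30 : a₃ = 0 := by rw [h31] at ha3x; simpa using ha3x
    have ha11 : a₁ = 1 := by linarith
    have hy1 : g₁.2 = 1/2 := by
      linear_combination haY - g₂.2 * ha20 - g₃.2 * ha30 - g₁.2 * ha11
    have hc1 : c₁ = 1/2 := by linear_combination hcS - hcX + c₃ * h31
    have hcy : c₂*g₂.2 + c₃*g₃.2 = 0 := by
      linear_combination hcY - g₁.2 * hc1 - (1/2) * hy1
    have hc2y : c₂*g₂.2 = 0 := by
      linarith [mul_nonneg hc₂ hy2l, mul_nonneg hc₃ hy3l]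
    have hc3y : c₃*g₃.2 = 0 := by
      linarith [mul_nonneg hc₂ hy2l, mul_nonneg hc₃ hy3l]
    have hd1 : d₁ = 1/2 := by linear_combination hdS - hdX + d₃ * h31
    have hdy : d₂*(1-g₂.2) + d₃*(1-g₃.2) = 0 := by
      linear_combination hdS - hd1 - hdY + g₁.2 * hd1 + (1/2) * hy1
    have hd2y : d₂*(1-g₂.2) = 0 := by
      linarith [mul_nonneg hd₂ (by linarith : (0:ℝ) ≤ 1-g₂.2),
        mul_nonneg hd₃ (by linarith : (0:ℝ) ≤ 1-g₃.2)]
    have hd3y : d₃*(1-g₃.2) = 0 := by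
      linarith [mul_nonneg hd₂ (by linarith : (0:ℝ) ≤ 1-g₂.2),
        mul_nonneg hd₃ (by linarith : (0:ℝ) ≤ 1-g₃.2)]
    have hy0 : g₂.2 = 0 ∨ g₃.2 = 0 := by
      rcases mul_eq_zero.mp hc2y with h | h
      · rcases mul_eq_zero.mp hc3y with h' | h'
        · exact absurd hcS (by rw [hc1, h, h']; norm_num)
        · exact Or.inr h'
      · exact Or.inl h
    have hy1' : g₂.2 = 1 ∨ g₃.2 = 1 := by
      rcases mul_eq_zero.mp hd2y with h | h
      · rcases mul_eq_zero.mp hd3y with h' | h'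
        · exact absurd hdS (by rw [hd1, h, h']; norm_num)
        · exact Or.inr (by linarith)
      · exact Or.inl (by linarith)
    have e₁ : g₁ = ((0:ℝ), (1/2:ℝ)) := Prod.ext h1 hy1
    rcases hy0 with h | h <;> rcases hy1' with h' | h'
    · exact absurd (h.symm.trans h') (by norm_num)
    · have e₂ : g₂ = ((1:ℝ), (0:ℝ)) := Prod.ext h2 h
      have e₃ : g₃ = ((1:ℝ), (1:ℝ)) := Prod.ext h31 h'
      rw [e₁, e₂, e₃]
      exact congrArg _ (by ext p; simp; tauto)
    · have e₂ : g₂ = ((1:ℝ), (1:ℝ)) := Prod.ext h2 h'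
      have e₃ : g₃ = ((1:ℝ), (0:ℝ)) := Prod.ext h31 h
      rw [e₁, e₂, e₃]
      exact congrArg _ (by ext p; simp; tauto)
    · exact absurd (h.symm.trans h') (by norm_num)
  · -- contradiction case
    exfalso
    have ha30 : a₃ = 0 := (mul_eq_zero.mp ha3x).resolve_right h30
    have hb30 : b₃ = 0 := by
      rcases mul_eq_zero.mp hb3x with h | h
      · exact h
      · exact absurd (by linarith : g₃.1 = 1) h31
    have ha11 : a₁ = 1 := by linarith
    have hb21 : b₂ = 1 := by linarith
    have hy1 : g₁.2 = 1/2 := by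
      linear_combination haY - g₂.2 * ha20 - g₃.2 * ha30 - g₁.2 * ha11
    have hy2 : g₂.2 = 1/2 := by
      linear_combination hbY - g₁.2 * hb10 - g₃.2 * hb30 - g₂.2 * hb21
    have ec : c₃*(g₃.2 - 1/2) = -(1/4) := by
      linear_combination hcY - (1/2) * hcS - c₁ * hy1 - c₂ * hy2
    have ed : d₃*(g₃.2 - 1/2) = 1/4 := by
      linear_combination hdY - (1/2) * hdS - d₁ * hy1 - d₂ * hy2
    have hm : c₃*d₃*(g₃.2 - 1/2)^2 = -(1/16) := by
      linear_combination (d₃*(g₃.2 - 1/2)) * ec - (1/4) * ed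
    have hnn : 0 ≤ c₃*d₃*(g₃.2 - 1/2)^2 :=
      mul_nonneg (mul_nonneg hc₃ hd₃) (sq_nonneg _)
    linarith only [hm, hnn]


/-- The gadget lemma (Lemma 1), uniqueness part: any triangle sandwiched between the
four-point set `S` and the unit square `P` equals `T₀` or `T₁`. -/
theorem gadget_uniqueness
    (P : Set (ℝ × ℝ)) (hP : P = Set.Icc (0 : ℝ) 1 ×ˢ Set.Icc (0 : ℝ) 1)
    (S : Set (ℝ × ℝ)) (hS : S = {(0, 1/2), (1, 1/2), (1/2, 1/4), (1/2, 3/4)})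
    (g₁ g₂ g₃ : ℝ × ℝ)
    (hST : S ⊆ convexHull ℝ {g₁, g₂, g₃})
    (hTP : convexHull ℝ {g₁, g₂, g₃} ⊆ P) :
    convexHull ℝ {g₁, g₂, g₃} = convexHull ℝ {((0 : ℝ), (0 : ℝ)), (0, 1), (1, 1/2)} ∨
    convexHull ℝ {g₁, g₂, g₃} = convexHull ℝ {((1 : ℝ), (0 : ℝ)), (1, 1), (0, 1/2)} := by
  subst hP hS
  have hA : ((0:ℝ), (1/2:ℝ)) ∈ convexHull ℝ {g₁,g₂,g₃} := hST (by norm_num)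
  have hB : ((1:ℝ), (1/2:ℝ)) ∈ convexHull ℝ {g₁,g₂,g₃} := hST (by norm_num)
  have hC : ((1/2:ℝ), (1/4:ℝ)) ∈ convexHull ℝ {g₁,g₂,g₃} := hST (by norm_num)
  have hD : ((1/2:ℝ), (3/4:ℝ)) ∈ convexHull ℝ {g₁,g₂,g₃} := hST (by norm_num)
  have hg₁ := hTP (subset_convexHull ℝ _ (by simp : g₁ ∈ ({g₁,g₂,g₃} : Set (ℝ×ℝ))))
  have hg₂ := hTP (subset_convexHull ℝ _ (by simp : g₂ ∈ ({g₁,g₂,g₃} : Set (ℝ×ℝ))))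
  have hg₃ := hTP (subset_convexHull ℝ _ (by simp : g₃ ∈ ({g₁,g₂,g₃} : Set (ℝ×ℝ))))
  simp only [Set.mem_prod, Set.mem_Icc] at hg₁ hg₂ hg₃
  obtain ⟨⟨hx1l, hx1u⟩, -⟩ := hg₁
  obtain ⟨⟨hx2l, hx2u⟩, -⟩ := hg₂
  obtain ⟨⟨hx3l, hx3u⟩, -⟩ := hg₃
  obtain ⟨a₁,a₂,a₃,ha₁,ha₂,ha₃,haS,haX,-⟩ := combo _ g₁ g₂ g₃ hA
  obtain ⟨b₁,b₂,b₃,hb₁,hb₂,hb₃,hbS,hbX,-⟩ := combo _ g₁ g₂ g₃ hB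
  norm_num at haX hbX
  have n₁ : 0 ≤ a₁*g₁.1 := mul_nonneg ha₁ hx1l
  have n₂ : 0 ≤ a₂*g₂.1 := mul_nonneg ha₂ hx2l
  have n₃ : 0 ≤ a₃*g₃.1 := mul_nonneg ha₃ hx3l
  have e₁ : a₁*g₁.1 = 0 := by linarith
  have e₂ : a₂*g₂.1 = 0 := by linarith
  have e₃ : a₃*g₃.1 = 0 := by linarith
  have hfe : b₁*(1-g₁.1) + b₂*(1-g₂.1) + b₃*(1-g₃.1) = 0 := by
    linear_combination hbS - hbX
  have m₁ : 0 ≤ b₁*(1-g₁.1) := mul_nonneg hb₁ (by linarith)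
  have m₂ : 0 ≤ b₂*(1-g₂.1) := mul_nonneg hb₂ (by linarith)
  have m₃ : 0 ≤ b₃*(1-g₃.1) := mul_nonneg hb₃ (by linarith)
  have f₁ : b₁*(1-g₁.1) = 0 := by linarith
  have f₂ : b₂*(1-g₂.1) = 0 := by linarith
  have f₃ : b₃*(1-g₃.1) = 0 := by linarith
  have P0 : g₁.1 = 0 ∨ g₂.1 = 0 ∨ g₃.1 = 0 := by
    rcases mul_eq_zero.mp e₁ with h | h
    · rcases mul_eq_zero.mp e₂ with h' | h'
      · rcases mul_eq_zero.mp e₃ with h'' | h''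
        · exact absurd haS (by rw [h, h', h'']; norm_num)
        · exact Or.inr (Or.inr h'')
      · exact Or.inr (Or.inl h')
    · exact Or.inl h
  have P1 : g₁.1 = 1 ∨ g₂.1 = 1 ∨ g₃.1 = 1 := by
    rcases mul_eq_zero.mp f₁ with h | h
    · rcases mul_eq_zero.mp f₂ with h' | h'
      · rcases mul_eq_zero.mp f₃ with h'' | h''
        · exact absurd hbS (by rw [h, h', h'']; norm_num)
        · exact Or.inr (Or.inr (by linarith))
      · exact Or.inr (Or.inl (by linarith))
    · exact Or.inl (by linarith)
  rcases P0 with h0 | h0 | h0 <;> rcases P1 with h1 | h1 | h1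
  · exact absurd (h0.symm.trans h1) (by norm_num)
  · exact core g₁ g₂ g₃ hA hB hC hD hTP h0 h1
  · have hset : ({g₁,g₃,g₂} : Set (ℝ×ℝ)) = {g₁,g₂,g₃} := by ext p; simp; tauto
    have := core g₁ g₃ g₂ (by rw [hset]; exact hA) (by rw [hset]; exact hB)
      (by rw [hset]; exact hC) (by rw [hset]; exact hD) (by rw [hset]; exact hTP) h0 h1
    rwa [hset] at this
  · have hset : ({g₂,g₁,g₃} : Set (ℝ×ℝ)) = {g₁,g₂,g₃} := by ext p; simp; tauto
    have := core g₂ g₁ g₃ (by rw [hset]; exact hA) (by rw [hset]; exact hB)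
      (by rw [hset]; exact hC) (by rw [hset]; exact hD) (by rw [hset]; exact hTP) h0 h1
    rwa [hset] at this
  · exact absurd (h0.symm.trans h1) (by norm_num)
  · have hset : ({g₂,g₃,g₁} : Set (ℝ×ℝ)) = {g₁,g₂,g₃} := by ext p; simp; tauto
    have := core g₂ g₃ g₁ (by rw [hset]; exact hA) (by rw [hset]; exact hB)
      (by rw [hset]; exact hC) (by rw [hset]; exact hD) (by rw [hset]; exact hTP) h0 h1
    rwa [hset] at this
  · have hset : ({g₃,g₁,g₂} : Set (ℝ×ℝ)) = {g₁,g₂,g₃} := by ext p; simp; tauto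
    have := core g₃ g₁ g₂ (by rw [hset]; exact hA) (by rw [hset]; exact hB)
      (by rw [hset]; exact hC) (by rw [hset]; exact hD) (by rw [hset]; exact hTP) h0 h1
    rwa [hset] at this
  · have hset : ({g₃,g₂,g₁} : Set (ℝ×ℝ)) = {g₁,g₂,g₃} := by ext p; simp; tauto
    have := core g₃ g₂ g₁ (by rw [hset]; exact hA) (by rw [hset]; exact hB)
      (by rw [hset]; exact hC) (by rw [hset]; exact hD) (by rw [hset]; exact hTP) h0 h1
    rwa [hset] at this
  · exact absurd (h0.symm.trans h1) (by norm_num)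
end

section
/- Let P ⊆ ℝ^d be a convex set, let S ⊂ ℝ^d be a finite set, and let v₁, …, v_d ∈ P. Then the set { v ∈ ℝ^d : S ⊆ convexHull{v₁,…,v_d, v} and convexHull{v₁,…,v_d, v} ⊆ P } is convex. -/
lemma mem_hull_insert_combo {E : Type*} [AddCommGroup E] [Module ℝ E] {R : Set E}
    (hR : R.Nonempty) {a b s : E} {t u : ℝ} (ht : 0 ≤ t) (hu : 0 ≤ u) (htu : t + u = 1)
    (ha : s ∈ convexHull ℝ (insert a R)) (hb : s ∈ convexHull ℝ (insert b R)) :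
    s ∈ convexHull ℝ (insert (t • a + u • b) R) := by
  rcases eq_or_lt_of_le ht with h | htpos
  · have hu1 : u = 1 := by linarith
    have : t • a + u • b = b := by rw [← h, hu1]; simp
    rw [this]; exact hb
  rcases eq_or_lt_of_le hu with h | hupos
  · have ht1 : t = 1 := by linarith
    have : t • a + u • b = a := by rw [← h, ht1]; simp
    rw [this]; exact ha
  rw [convexHull_insert hR] at ha hb ⊢
  simp only [mem_convexJoin, Set.mem_singleton_iff, exists_eq_left] at ha hb ⊢
  obtain ⟨p, hp, hsp⟩ := ha
  obtain ⟨q, hq, hsq⟩ := hb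
  obtain ⟨α, α', hα, hα', hαs, heq1⟩ := hsp
  obtain ⟨β, β', hβ, hβ', hβs, heq2⟩ := hsq
  have hα'e : α' = 1 - α := by linarith
  have hβ'e : β' = 1 - β := by linarith
  subst hα'e hβ'e
  rcases eq_or_lt_of_le hα with h | hαpos
  · have hs : s = p := by rw [← heq1, ← h]; simp
    exact ⟨p, hp, by rw [hs]; exact right_mem_segment ℝ _ _⟩
  rcases eq_or_lt_of_le hβ with h | hβpos
  · have hs : s = q := by rw [← heq2, ← h]; simp
    exact ⟨q, hq, by rw [hs]; exact right_mem_segment ℝ _ _⟩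
  have hDpos : (0 : ℝ) < t * β + u * α := by positivity
  have hDne : t * β + u * α ≠ 0 := ne_of_gt hDpos
  have h1 : 0 ≤ t * β * (1 - α) := mul_nonneg (by positivity) hα'
  have h2 : 0 ≤ u * α * (1 - β) := mul_nonneg (by positivity) hβ'
  have hD2nn : (0 : ℝ) ≤ t * β * (1 - α) + u * α * (1 - β) := by linarith
  rcases eq_or_lt_of_le hD2nn with hD2z | hD2pos
  · -- degenerate case: α = β = 1, so s = a = b
    have e1 : t * β * (1 - α) = 0 := by linarith
    have e2 : u * α * (1 - β) = 0 := by linarith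
    have hα1 : α = 1 := by
      rcases mul_eq_zero.mp e1 with h' | h'
      · exact absurd h' (ne_of_gt (mul_pos htpos hβpos))
      · linarith
    have hβ1 : β = 1 := by
      rcases mul_eq_zero.mp e2 with h' | h'
      · exact absurd h' (ne_of_gt (mul_pos hupos hαpos))
      · linarith
    have hsa : s = a := by rw [← heq1, hα1]; simp
    have hsb : s = b := by rw [← heq2, hβ1]; simp
    have hts : t • a + u • b = s := by
      rw [← hsa, ← hsb, ← add_smul, htu, one_smul]
    exact ⟨p, hp, by rw [hts]; exact left_mem_segment ℝ _ _⟩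
  · have hD2ne : t * β * (1 - α) + u * α * (1 - β) ≠ 0 := ne_of_gt hD2pos
    have hsum : t * β + u * α - α * β = t * β * (1 - α) + u * α * (1 - β) := by
      linear_combination α * β * htu
    have hγ1 : 1 - α * β / (t * β + u * α)
        = (t * β * (1 - α) + u * α * (1 - β)) / (t * β + u * α) := by
      rw [← hsum, sub_div, div_self hDne]
    have hγnn : (0 : ℝ) ≤ α * β / (t * β + u * α) := by positivity
    have h1γnn : (0 : ℝ) ≤ 1 - α * β / (t * β + u * α) := by rw [hγ1]; positivity
    set r : E := (t * β * (1 - α) / (t * β * (1 - α) + u * α * (1 - β))) • p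
        + (u * α * (1 - β) / (t * β * (1 - α) + u * α * (1 - β))) • q with hr
    have hrmem : r ∈ convexHull ℝ R := by
      apply (convex_convexHull ℝ R) hp hq
      · exact div_nonneg h1 (le_of_lt hD2pos)
      · exact div_nonneg h2 (le_of_lt hD2pos)
      · rw [← add_div, div_self hD2ne]
    refine ⟨r, hrmem, α * β / (t * β + u * α), 1 - α * β / (t * β + u * α),
      hγnn, h1γnn, by ring, ?_⟩
    have key : (α * β / (t * β + u * α)) • (t • a + u • b)
        + (1 - α * β / (t * β + u * α)) • r
        = (t * β / (t * β + u * α)) • (α • a + (1 - α) • p)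
        + (u * α / (t * β + u * α)) • (β • b + (1 - β) • q) := by
      rw [hγ1, hr]
      generalize t * β * (1 - α) + u * α * (1 - β) = G at hD2ne ⊢
      match_scalars <;> field_simp <;> ring
    rw [key, heq1, heq2, ← add_smul, ← add_div, div_self hDne, one_smul]

/-- Consequence of the Section 4 theorem: the set of feasible positions for the last
vertex of a solution simplex (with the other `d` vertices fixed in `P`) is convex. -/
theorem last_vertex_feasible_set_convex {d : ℕ}
    (P : Set (Fin d → ℝ)) (hP : Convex ℝ P)
    (S : Set (Fin d → ℝ)) (hSfin : S.Finite)
    (v : Fin d → (Fin d → ℝ)) (hv : ∀ i, v i ∈ P) :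
    Convex ℝ {v' : Fin d → ℝ |
      S ⊆ convexHull ℝ (insert v' (Set.range v)) ∧
      convexHull ℝ (insert v' (Set.range v)) ⊆ P} := by
  rcases Nat.eq_zero_or_pos d with hd | hd
  · subst hd
    intro x hx y hy t u ht hu htu
    have : t • x + u • y = x := Subsingleton.elim _ _
    rwa [this]
  · have hR : (Set.range v).Nonempty := Set.range_nonempty_iff_nonempty.mpr ⟨⟨0, hd⟩⟩
    intro x hx y hy t u ht hu htu
    obtain ⟨hx1, hx2⟩ := hx
    obtain ⟨hy1, hy2⟩ := hy
    have hxP : x ∈ P := hx2 (subset_convexHull ℝ _ (Set.mem_insert _ _))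
    have hyP : y ∈ P := hy2 (subset_convexHull ℝ _ (Set.mem_insert _ _))
    constructor
    · intro s hs
      exact mem_hull_insert_combo hR ht hu htu (hx1 hs) (hy1 hs)
    · apply convexHull_min _ hP
      intro z hz
      rcases hz with hz | hz
      · rw [hz]; exact hP hxP hyP ht hu htu
      · obtain ⟨i, rfl⟩ := hz
        exact hv i
end
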